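/- Let n₁ > 2 and n₂ > 2. In the multivariate polynomial ring R = ℚ[a₂, …, a_{n₁}, b₂, …, b_{n₂}], define for each k with 2 ≤ k ≤ n₁ + n₂ the element r_k = Σ_{i+j=k} a_i b_j, where by convention a₀ = b₀ = 1, a₁ = b₁ = 0, a_i = 0 for i > n₁, and b_j = 0 for j > n₂. Then the element a₃ does not belong to the ideal of R generated by r₂, …, r_{n₁+n₂}. -/

import Mathlib

open MvPolynomial

/-- The variables `a₂, …, a_{n₁}` of `R = ℚ[a₂, …, a_{n₁}, b₂, …, b_{n₂}]`, with the
conventions `a₀ = 1`, `a₁ = 0` and `a_i = 0` for `i > n₁`. -/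
noncomputable def aVar (n₁ n₂ : ℕ) (i : ℕ) : MvPolynomial (Fin (n₁ - 1) ⊕ Fin (n₂ - 1)) ℚ :=
  if i = 0 then 1 else if i = 1 then 0
    else if h : i - 2 < n₁ - 1 then X (Sum.inl ⟨i - 2, h⟩) else 0

/-- The variables `b₂, …, b_{n₂}` of `R = ℚ[a₂, …, a_{n₁}, b₂, …, b_{n₂}]`, with the
conventions `b₀ = 1`, `b₁ = 0` and `b_j = 0` for `j > n₂`. -/
noncomputable def bVar (n₁ n₂ : ℕ) (j : ℕ) : MvPolynomial (Fin (n₁ - 1) ⊕ Fin (n₂ - 1)) ℚ :=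
  if j = 0 then 1 else if j = 1 then 0
    else if h : j - 2 < n₂ - 1 then X (Sum.inr ⟨j - 2, h⟩) else 0

/-- `r_k = Σ_{i+j=k} a_i b_j`, with the conventions `a₀ = b₀ = 1`, `a₁ = b₁ = 0`,
`a_i = 0` for `i > n₁` and `b_j = 0` for `j > n₂`. -/
noncomputable def rPoly (n₁ n₂ : ℕ) (k : ℕ) :
    MvPolynomial (Fin (n₁ - 1) ⊕ Fin (n₂ - 1)) ℚ :=
  ∑ p ∈ Finset.HasAntidiagonal.antidiagonal k, aVar n₁ n₂ p.1 * bVar n₁ n₂ p.2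

/-- For `n₁ > 2` and `n₂ > 2`, in `R = ℚ[a₂, …, a_{n₁}, b₂, …, b_{n₂}]`,
the element `a₃` does not belong to the ideal generated by `r₂, …, r_{n₁+n₂}`, where
`r_k = Σ_{i+j=k} a_i b_j` (with `a₀ = b₀ = 1`, `a₁ = b₁ = 0`, `a_i = 0` for `i > n₁`,
`b_j = 0` for `j > n₂`). -/
theorem a3_not_mem_span_whitney (n₁ n₂ : ℕ) (h₁ : 2 < n₁) (h₂ : 2 < n₂) :
    aVar n₁ n₂ 3 ∉ Ideal.span ((fun k => rPoly n₁ n₂ k) '' Set.Icc 2 (n₁ + n₂)) := by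
  classical
  set ε : DualNumber ℚ := DualNumber.eps with hεdef
  have hεε : ε * ε = 0 := DualNumber.eps_mul_eps
  have hεne : ε ≠ 0 := by
    intro h
    have h2 := congrArg TrivSqZeroExt.snd h
    rw [hεdef, DualNumber.snd_eps, TrivSqZeroExt.snd_zero] at h2
    exact one_ne_zero h2
  set v : Fin (n₁ - 1) ⊕ Fin (n₂ - 1) → DualNumber ℚ :=
    Sum.elim (fun i => if (i : ℕ) = 1 then ε else 0)
      (fun j => if (j : ℕ) = 1 then -ε else 0) with hv
  set φ : MvPolynomial (Fin (n₁ - 1) ⊕ Fin (n₂ - 1)) ℚ →ₐ[ℚ] DualNumber ℚ := aeval v with hφ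
  set F : Polynomial (DualNumber ℚ) := 1 + Polynomial.C ε * Polynomial.X ^ 3 with hF
  set G : Polynomial (DualNumber ℚ) := 1 - Polynomial.C ε * Polynomial.X ^ 3 with hG
  have hFG : F * G = 1 := by
    have h6 : F * G = 1 - Polynomial.C (ε * ε) * Polynomial.X ^ 6 := by
      rw [hF, hG, map_mul]; ring
    rw [h6, hεε]; simp
  have hFcoeff : ∀ i, F.coeff i = if i = 0 then 1 else if i = 3 then ε else 0 := by
    intro i
    rw [hF]
    simp only [Polynomial.coeff_add, Polynomial.coeff_one, Polynomial.coeff_C_mul,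
      Polynomial.coeff_X_pow]
    split_ifs <;> first | (exfalso; omega) | ring
  have hGcoeff : ∀ i, G.coeff i = if i = 0 then 1 else if i = 3 then -ε else 0 := by
    intro i
    rw [hG]
    simp only [Polynomial.coeff_sub, Polynomial.coeff_one, Polynomial.coeff_C_mul,
      Polynomial.coeff_X_pow]
    split_ifs <;> first | (exfalso; omega) | ring
  have hA : ∀ i, φ (aVar n₁ n₂ i) = F.coeff i := by
    intro i
    rw [hFcoeff]
    match i with
    | 0 => simp [aVar]
    | 1 => simp [aVar]
    | (m + 2) =>
      rw [aVar, if_neg (by omega : (m + 2 : ℕ) ≠ 0), if_neg (by omega : (m + 2 : ℕ) ≠ 1)]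
      by_cases h : m + 2 - 2 < n₁ - 1
      · rw [dif_pos h, hφ, aeval_X, hv]
        simp only [Sum.elim_inl]
        by_cases h3 : m + 2 = 3
        · rw [if_pos (show ((⟨m + 2 - 2, h⟩ : Fin (n₁ - 1)) : ℕ) = 1 by
            simp only [Fin.val_mk]; omega), if_neg (by omega), if_pos h3]
        · rw [if_neg (show ¬ ((⟨m + 2 - 2, h⟩ : Fin (n₁ - 1)) : ℕ) = 1 by
            simp only [Fin.val_mk]; omega), if_neg (by omega), if_neg h3]
      · rw [dif_neg h, if_neg (by omega), if_neg (show ¬ m + 2 = 3 by omega)]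
        exact map_zero φ
  have hB : ∀ i, φ (bVar n₁ n₂ i) = G.coeff i := by
    intro i
    rw [hGcoeff]
    match i with
    | 0 => simp [bVar]
    | 1 => simp [bVar]
    | (m + 2) =>
      rw [bVar, if_neg (by omega : (m + 2 : ℕ) ≠ 0), if_neg (by omega : (m + 2 : ℕ) ≠ 1)]
      by_cases h : m + 2 - 2 < n₂ - 1
      · rw [dif_pos h, hφ, aeval_X, hv]
        simp only [Sum.elim_inr]
        by_cases h3 : m + 2 = 3
        · rw [if_pos (show ((⟨m + 2 - 2, h⟩ : Fin (n₂ - 1)) : ℕ) = 1 by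
            simp only [Fin.val_mk]; omega), if_neg (by omega), if_pos h3]
        · rw [if_neg (show ¬ ((⟨m + 2 - 2, h⟩ : Fin (n₂ - 1)) : ℕ) = 1 by
            simp only [Fin.val_mk]; omega), if_neg (by omega), if_neg h3]
      · rw [dif_neg h, if_neg (by omega), if_neg (show ¬ m + 2 = 3 by omega)]
        exact map_zero φ
  have hR : ∀ k, 1 ≤ k → φ (rPoly n₁ n₂ k) = 0 := by
    intro k hk
    have : φ (rPoly n₁ n₂ k) = ∑ p ∈ Finset.HasAntidiagonal.antidiagonal k, F.coeff p.1 * G.coeff p.2 := by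
      rw [rPoly, map_sum]
      refine Finset.sum_congr rfl fun p _ => ?_
      rw [map_mul, hA, hB]
    rw [this, ← Polynomial.coeff_mul, hFG, Polynomial.coeff_one]
    simp
    omega
  intro hmem
  have h0 : φ (aVar n₁ n₂ 3) ∈ Ideal.map φ
      (Ideal.span ((fun k => rPoly n₁ n₂ k) '' Set.Icc 2 (n₁ + n₂))) :=
    Ideal.mem_map_of_mem _ hmem
  rw [Ideal.map_span] at h0
  have hsub : (⇑φ '' ((fun k => rPoly n₁ n₂ k) '' Set.Icc 2 (n₁ + n₂))) ⊆ {0} := by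
    rintro x ⟨y, ⟨k, hk, rfl⟩, rfl⟩
    exact hR k (by exact_mod_cast le_trans one_le_two hk.1)
  have hle : Ideal.span (⇑φ '' ((fun k => rPoly n₁ n₂ k) '' Set.Icc 2 (n₁ + n₂))) ≤
      Ideal.span {0} := Ideal.span_mono hsub
  rw [Ideal.span_singleton_eq_bot.mpr rfl] at hle
  have hz : φ (aVar n₁ n₂ 3) = 0 := hle h0
  rw [hA 3, hFcoeff 3] at hz
  simp at hz
  exact hεne hz
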